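/- There is an absolute constant c > 0 such that in the herald-protocol round model, for every vertex u and every integer k ≥ 1, the probability that at least one vertex of N^k(u) receives a message is at most c · π_ℓ · α(G[N^k(u)]). -/

import Mathlib

open Finset

/-- The action a vertex takes in one round: `none` is idle, `some (i, false)` is listening on
channel `i+1`, and `some (i, true)` is broadcasting on channel `i+1` (channels are numbered
`1, …, nA`). -/
abbrev Act (nA : ℕ) := Option (Fin nA × Bool)

/-- The probability of each action in the herald-protocol round model, for a vertex with
activity `g` and listening probability `p`: on channel `i+1` the vertex listens with
probability `p·g·2^{-(i+1)}` and broadcasts with probability `(1−p)·g·2^{-(i+1)}`; with the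
remaining probability it is idle. -/
noncomputable def actProb (nA : ℕ) (p g : ℝ) : Act nA → ℝ
  | some (i, false) => p * g * (2 : ℝ) ^ (-((i.1 : ℤ) + 1))
  | some (i, true) => (1 - p) * g * (2 : ℝ) ^ (-((i.1 : ℤ) + 1))
  | none => 1 - ∑ i : Fin nA, g * (2 : ℝ) ^ (-((i.1 : ℤ) + 1))

open Classical in
/-- The probability of an event `E` in one round of the herald-protocol round model, where all
vertices choose their actions independently. -/
noncomputable def roundPr {V : Type*} [Fintype V] [DecidableEq V] (nA : ℕ) (p : ℝ)
    (γ : V → ℝ) (E : (V → Act nA) → Prop) : ℝ :=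
  ∑ f : V → Act nA, if E f then ∏ v, actProb nA p (γ v) (f v) else 0

/-- `v` listens on channel `i` (i.e. channel number `i+1`). -/
def listens {V : Type*} {nA : ℕ} (f : V → Act nA) (v : V) (i : Fin nA) : Prop :=
  f v = some (i, false)

/-- `v` broadcasts on channel `i` (i.e. channel number `i+1`). -/
def broadcasts {V : Type*} {nA : ℕ} (f : V → Act nA) (v : V) (i : Fin nA) : Prop :=
  f v = some (i, true)

/-- `v` operates (listens or broadcasts) on channel `i`. -/
def operates {V : Type*} {nA : ℕ} (f : V → Act nA) (v : V) (i : Fin nA) : Prop :=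
  listens f v i ∨ broadcasts f v i

open Classical in
/-- `v` receives a message on channel `i`: it listens on channel `i` and exactly one of its
neighbors broadcasts on channel `i`. -/
def receivesOn {V : Type*} [Fintype V] [DecidableEq V] (G : SimpleGraph V)
    [DecidableRel G.Adj] {nA : ℕ} (f : V → Act nA) (v : V) (i : Fin nA) : Prop :=
  listens f v i ∧ ((G.neighborFinset v).filter fun w => broadcasts f w i).card = 1

/-- `v` receives a message (on some channel). -/
def receives {V : Type*} [Fintype V] [DecidableEq V] (G : SimpleGraph V)
    [DecidableRel G.Adj] {nA : ℕ} (f : V → Act nA) (v : V) : Prop :=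
  ∃ i : Fin nA, receivesOn G f v i

/-- `ball G u k` is the set `N^k(u)` of vertices at distance at most `k` from `u` in `G`
(including `u` itself). -/
def ball {V : Type*} (G : SimpleGraph V) (u : V) (k : ℕ) : Set V :=
  {v | ∃ p : G.Walk u v, p.length ≤ k}

/-- The independence number of the subgraph of `G` induced by a vertex set `S`. -/
noncomputable def indepNumOn {V : Type*} [Fintype V] (G : SimpleGraph V) (S : Set V) : ℕ :=
  sSup {n | ∃ s : Finset V, ↑s ⊆ S ∧ (∀ a ∈ s, ∀ b ∈ s, a ≠ b → ¬ G.Adj a b) ∧ s.card = n}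

/-- `Γ(x) = ∑_{y ∈ N(x) ∪ {x}} γ(y)`. -/
noncomputable def Gam {V : Type*} [Fintype V] [DecidableEq V] (G : SimpleGraph V)
    [DecidableRel G.Adj] (γ : V → ℝ) (x : V) : ℝ :=
  ∑ y ∈ insert x (G.neighborFinset x), γ y

/-- `Γ°(x) = ∑_{y ∈ N(x)} γ(y)`. -/
noncomputable def GamO {V : Type*} [Fintype V] [DecidableEq V] (G : SimpleGraph V)
    [DecidableRel G.Adj] (γ : V → ℝ) (x : V) : ℝ :=
  ∑ y ∈ G.neighborFinset x, γ y


section herald_aux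
open Real

lemma geomsum (n : ℕ) : ∑ i : Fin n, (2:ℝ) ^ (-((i:ℤ)+1)) = 1 - (1/2)^n := by
  induction n with
  | zero => simp
  | succ m ih =>
    rw [Fin.sum_univ_castSucc]
    simp only [Fin.coe_castSucc, Fin.val_last]
    rw [ih]
    rw [show (-((m:ℤ)+1)) = -1 + -(m:ℤ) by ring, zpow_add₀ (by norm_num : (2:ℝ) ≠ 0)]
    have h2 : (2:ℝ) ^ (-(m:ℤ)) = (1/2)^m := by
      rw [zpow_neg, zpow_natCast, ← inv_pow]; norm_num
    rw [h2]
    norm_num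
    ring

lemma geomsum_le (n : ℕ) : ∑ i : Fin n, (2:ℝ) ^ (-((i:ℤ)+1)) ≤ 1 := by
  rw [geomsum]
  have : (0:ℝ) ≤ (1/2)^n := by positivity
  linarith

lemma tpos {n : ℕ} (i : Fin n) : (0:ℝ) < (2:ℝ) ^ (-((i:ℤ)+1)) := by positivity

lemma tle {n : ℕ} (i : Fin n) : (2:ℝ) ^ (-((i:ℤ)+1)) ≤ 1/2 := by
  rw [show (1/2 : ℝ) = (2:ℝ)^(-1 : ℤ) by norm_num]
  apply zpow_le_zpow_right₀ (by norm_num : (1:ℝ) ≤ 2)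
  have : (0:ℤ) ≤ (i:ℤ) := Int.natCast_nonneg _
  omega

noncomputable def gfun (s : ℝ) : ℝ := 250 * (s / (1 + s))

lemma gfun_nonneg {s : ℝ} (hs : 0 ≤ s) : 0 ≤ gfun s := by
  unfold gfun; positivity

lemma gfun_le {s : ℝ} (hs : 0 ≤ s) : gfun s ≤ 250 := by
  unfold gfun
  have h1 : (0:ℝ) < 1 + s := by linarith
  have h2 : s / (1 + s) ≤ 1 := div_le_one_of_le₀ (by linarith) h1.le
  linarith

lemma gfun_step {s : ℝ} (hs : 0 ≤ s) : s^2 * Real.exp (-s) ≤ gfun s - gfun (s/2) := by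
  have h1 : s * (1+s) * (2+s) ≤ 250 * Real.exp s := by
    have e1 : (s+2)/3 + 1 ≤ Real.exp ((s+2)/3) := Real.add_one_le_exp _
    have e2 : s + 2 ≤ 3 * Real.exp ((s+2)/3) := by linarith
    have e3 : (s+2)^3 ≤ 27 * Real.exp ((s+2)/3) ^ 3 := by
      calc (s+2)^3 ≤ (3 * Real.exp ((s+2)/3))^3 := by
            apply pow_le_pow_left₀ (by linarith) e2
        _ = 27 * Real.exp ((s+2)/3) ^ 3 := by ring
    have e4 : Real.exp ((s+2)/3) ^ 3 = Real.exp (s+2) := by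
      rw [← Real.exp_nat_mul]
      ring_nf
    have e5 : Real.exp (s+2) = Real.exp 2 * Real.exp s := by
      rw [← Real.exp_add]; ring_nf
    have e6 : Real.exp 2 ≤ 7.4 := by
      have := Real.exp_one_lt_d9
      have h2 : Real.exp 2 = Real.exp 1 * Real.exp 1 := by
        rw [← Real.exp_add]; norm_num
      nlinarith [Real.exp_pos 1]
    have e7 : (s+2)^3 ≤ 250 * Real.exp s := by
      rw [e4, e5] at e3
      nlinarith [Real.exp_pos s]
    nlinarith [sq_nonneg s, Real.exp_pos s]
  have hd : gfun s - gfun (s/2) = 250 * s / ((1+s) * (2+s)) := by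
    unfold gfun
    have d1 : (0:ℝ) < 1 + s := by linarith
    have d2 : (0:ℝ) < 1 + s/2 := by linarith
    field_simp
    ring
  rw [hd, le_div_iff₀ (by nlinarith : (0:ℝ) < (1+s)*(2+s))]
  have h3 : (s*(1+s)*(2+s)) * (s * Real.exp (-s)) ≤ (250 * Real.exp s) * (s * Real.exp (-s)) := by
    apply mul_le_mul_of_nonneg_right h1
    exact mul_nonneg hs (Real.exp_pos _).le
  have h4 : (250 * Real.exp s) * (s * Real.exp (-s)) = 250 * s := by
    rw [Real.exp_neg]
    field_simp
  nlinarith [h3, h4]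

lemma telescope (r : ℝ) (hr : 0 ≤ r) (n : ℕ) :
    ∑ i : Fin n, (r * (2:ℝ)^(-((i:ℤ)+1)))^2 * Real.exp (-(r * (2:ℝ)^(-((i:ℤ)+1)))) ≤ 250 := by
  have key : ∀ j : ℕ,
      (r * (2:ℝ)^(-((j:ℤ)+1)))^2 * Real.exp (-(r * (2:ℝ)^(-((j:ℤ)+1))))
        ≤ gfun (r * (2:ℝ)^(-((j:ℤ)+1))) - gfun (r * (2:ℝ)^(-((((j+1:ℕ)):ℤ)+1))) := by
    intro j
    have hs : 0 ≤ r * (2:ℝ)^(-((j:ℤ)+1)) := by positivity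
    have h := gfun_step hs
    have harg : r * (2:ℝ)^(-((j:ℤ)+1)) / 2 = r * (2:ℝ)^(-((((j+1:ℕ)):ℤ)+1)) := by
      push_cast
      rw [mul_div_assoc]
      congr 1
      rw [show (-((j:ℤ)+1+1)) = -((j:ℤ)+1) + (-1) by ring,
        zpow_add₀ (by norm_num : (2:ℝ) ≠ 0)]
      norm_num
      ring
    rwa [harg] at h
  calc ∑ i : Fin n, (r * (2:ℝ)^(-((i:ℤ)+1)))^2 * Real.exp (-(r * (2:ℝ)^(-((i:ℤ)+1))))
      = ∑ j ∈ range n, (r * (2:ℝ)^(-((j:ℤ)+1)))^2 * Real.exp (-(r * (2:ℝ)^(-((j:ℤ)+1)))) :=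
        Fin.sum_univ_eq_sum_range (fun j : ℕ => (r * (2:ℝ)^(-((j:ℤ)+1)))^2 * Real.exp (-(r * (2:ℝ)^(-((j:ℤ)+1))))) n
    _ ≤ ∑ j ∈ range n, (gfun (r * (2:ℝ)^(-((j:ℤ)+1))) - gfun (r * (2:ℝ)^(-(((j+1:ℕ):ℤ)+1)))) :=
        Finset.sum_le_sum fun j _ => key j
    _ = gfun (r * (2:ℝ)^(-(((0:ℕ):ℤ)+1))) - gfun (r * (2:ℝ)^(-(((n:ℕ):ℤ)+1))) :=
        Finset.sum_range_sub' (fun j : ℕ => gfun (r * (2:ℝ)^(-((j:ℤ)+1)))) n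
    _ ≤ 250 - 0 := by
        have b1 := gfun_le (s := r * (2:ℝ)^(-(((0:ℕ):ℤ)+1))) (by positivity)
        have b2 := gfun_nonneg (s := r * (2:ℝ)^(-(((n:ℕ):ℤ)+1))) (by positivity)
        linarith
    _ = 250 := by ring

lemma caroWei {V : Type*} [Fintype V] [DecidableEq V] (G : SimpleGraph V) [DecidableRel G.Adj]
    (w : V → ℝ) (hw : ∀ x, 0 ≤ w x) :
    ∀ s : Finset V, ∃ I : Finset V, I ⊆ s ∧ (∀ a ∈ I, ∀ b ∈ I, a ≠ b → ¬ G.Adj a b) ∧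
      ∑ x ∈ s, w x / (∑ y ∈ s.filter (fun y => y = x ∨ G.Adj x y), w y) ≤ I.card := by
  intro s
  induction s using Finset.strongInduction with
  | _ s ih =>
  by_cases hz : ∀ x ∈ s, w x = 0
  · refine ⟨∅, empty_subset _, by simp, ?_⟩
    rw [Finset.sum_eq_zero fun x hx => by rw [hz x hx, zero_div]]
    simp
  · push_neg at hz
    obtain ⟨x₁, hx₁s, hx₁w⟩ := hz
    have hP : (s.filter (fun x => 0 < w x)).Nonempty :=
      ⟨x₁, mem_filter.2 ⟨hx₁s, lt_of_le_of_ne (hw x₁) (Ne.symm hx₁w)⟩⟩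
    set Wt : V → ℝ := fun x => ∑ y ∈ s.filter (fun y => y = x ∨ G.Adj x y), w y with hWt
    obtain ⟨x₀, hx₀P, hmin⟩ := Finset.exists_min_image _ Wt hP
    rw [mem_filter] at hx₀P
    obtain ⟨hx₀s, hx₀w⟩ := hx₀P
    set nb : Finset V := s.filter (fun y => y = x₀ ∨ G.Adj x₀ y) with hnb
    have hx₀nb : x₀ ∈ nb := mem_filter.2 ⟨hx₀s, Or.inl rfl⟩
    have hnbs : nb ⊆ s := filter_subset _ _
    set s' : Finset V := s \ nb with hs'
    have hss : s' ⊂ s := by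
      refine Finset.ssubset_iff_of_subset (sdiff_subset) |>.2 ⟨x₀, hx₀s, ?_⟩
      simp [hs', hx₀nb, hx₀s]
    obtain ⟨I', hI's, hI'ind, hI'sum⟩ := ih s' hss
    have hx₀I' : x₀ ∉ I' := fun h => by
      have := hI's h
      rw [hs', mem_sdiff] at this
      exact this.2 hx₀nb
    refine ⟨insert x₀ I', ?_, ?_, ?_⟩
    · intro a ha
      rcases mem_insert.1 ha with rfl | ha'
      · exact hx₀s
      · exact (sdiff_subset) (hI's ha')
    · intro a ha b hb hab
      rcases mem_insert.1 ha with rfl | ha' <;> rcases mem_insert.1 hb with rfl | hb'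
      · exact absurd rfl hab
      · have := hI's hb'
        rw [hs', mem_sdiff, hnb, mem_filter] at this
        intro hadj
        exact this.2 ⟨this.1, Or.inr hadj⟩
      · have := hI's ha'
        rw [hs', mem_sdiff, hnb, mem_filter] at this
        intro hadj
        exact this.2 ⟨this.1, Or.inr (G.adj_symm hadj)⟩
      · exact hI'ind a ha' b hb' hab
    · have hWt0pos : 0 < Wt x₀ := by
        apply lt_of_lt_of_le hx₀w
        apply Finset.single_le_sum (fun y hy => hw y) (mem_filter.2 ⟨hx₀s, Or.inl rfl⟩)
      have hsplit : (∑ x ∈ s', w x / Wt x) + ∑ x ∈ nb, w x / Wt x = ∑ x ∈ s, w x / Wt x :=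
        Finset.sum_sdiff hnbs
      have boundA : ∑ x ∈ nb, w x / Wt x ≤ 1 := by
        have h1 : ∀ x ∈ nb, w x / Wt x ≤ w x / Wt x₀ := by
          intro x hx
          rcases eq_or_lt_of_le (hw x) with h0 | h0
          · rw [← h0, zero_div, zero_div]
          · exact div_le_div_of_nonneg_left (hw x) hWt0pos
              (hmin x (mem_filter.2 ⟨hnbs hx, h0⟩))
        calc ∑ x ∈ nb, w x / Wt x ≤ ∑ x ∈ nb, w x / Wt x₀ := Finset.sum_le_sum h1
          _ = (∑ x ∈ nb, w x) / Wt x₀ := by rw [Finset.sum_div]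
          _ = Wt x₀ / Wt x₀ := rfl
          _ = 1 := div_self hWt0pos.ne'
      have boundB : ∑ x ∈ s', w x / Wt x
          ≤ ∑ x ∈ s', w x / (∑ y ∈ s'.filter (fun y => y = x ∨ G.Adj x y), w y) := by
        apply Finset.sum_le_sum
        intro x hx
        rcases eq_or_lt_of_le (hw x) with h0 | h0
        · rw [← h0, zero_div, zero_div]
        · apply div_le_div_of_nonneg_left (hw x)
          · calc (0:ℝ) < w x := h0
              _ ≤ _ := Finset.single_le_sum (fun y _ => hw y)
                  (mem_filter.2 ⟨hx, Or.inl rfl⟩)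
          · apply Finset.sum_le_sum_of_subset_of_nonneg
            · exact Finset.filter_subset_filter _ (sdiff_subset)
            · exact fun y _ _ => hw y
      rw [← hsplit]
      rw [Finset.card_insert_of_notMem hx₀I']
      push_cast
      linarith

section probs
variable {nA : ℕ} {p g : ℝ}

lemma actProb_nonneg (hp0 : 0 ≤ p) (hp1 : p ≤ 1) (hg0 : 0 ≤ g) (hg1 : g ≤ 1) :
    ∀ a : Act nA, 0 ≤ actProb nA p g a := by
  rintro (_ | ⟨i, _ | _⟩) <;> simp only [actProb]
  · have h1 : ∑ i : Fin nA, g * (2:ℝ) ^ (-((i:ℤ)+1)) ≤ g * 1 := by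
      rw [← mul_sum]
      exact mul_le_mul_of_nonneg_left (geomsum_le nA) hg0
    linarith
  · have := (tpos i).le; positivity
  · have := (tpos i).le
    have : (0:ℝ) ≤ 1 - p := by linarith
    positivity

lemma actProb_sum : ∑ a : Act nA, actProb nA p g a = 1 := by
  rw [Fintype.sum_option]
  rw [Fintype.sum_prod_type]
  have : ∀ i : Fin nA, ∑ b : Bool, actProb nA p g (some (i, b))
      = g * (2:ℝ) ^ (-((i:ℤ)+1)) := by
    intro i
    rw [Fintype.sum_bool]
    show (1 - p) * g * _ + p * g * _ = _
    ring
  rw [Finset.sum_congr rfl fun i _ => this i]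
  show 1 - ∑ i : Fin nA, g * (2:ℝ) ^ (-((i:ℤ)+1)) + _ = 1
  ring

lemma actProb_le_one (hp0 : 0 ≤ p) (hp1 : p ≤ 1) (hg0 : 0 ≤ g) (hg1 : g ≤ 1) :
    ∀ a : Act nA, actProb nA p g a ≤ 1 := by
  intro a
  have h := actProb_sum (nA := nA) (p := p) (g := g)
  calc actProb nA p g a ≤ ∑ b : Act nA, actProb nA p g b :=
        Finset.single_le_sum (fun b _ => actProb_nonneg hp0 hp1 hg0 hg1 b) (mem_univ a)
    _ = 1 := h

end probs

section roundpr
variable {V : Type*} [Fintype V] [DecidableEq V] {nA : ℕ} {p : ℝ} {γ : V → ℝ}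

open Classical

lemma roundPr_nonneg (hpr : ∀ v a, 0 ≤ actProb nA p (γ v) a) (E) :
    0 ≤ roundPr nA p γ E := by
  apply Finset.sum_nonneg
  intro f _
  split
  · exact Finset.prod_nonneg fun v _ => hpr v (f v)
  · exact le_refl 0

lemma roundPr_mono (hpr : ∀ v a, 0 ≤ actProb nA p (γ v) a) {E E' : (V → Act nA) → Prop}
    (h : ∀ f, E f → E' f) : roundPr nA p γ E ≤ roundPr nA p γ E' := by
  apply Finset.sum_le_sum
  intro f _
  by_cases hE : E f
  · rw [if_pos hE, if_pos (h f hE)]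
  · rw [if_neg hE]
    split
    · exact Finset.prod_nonneg fun v _ => hpr v (f v)
    · exact le_refl 0

lemma roundPr_union {ι : Type*} [DecidableEq ι] (hpr : ∀ v a, 0 ≤ actProb nA p (γ v) a)
    (s : Finset ι) (A : ι → (V → Act nA) → Prop) :
    roundPr nA p γ (fun f => ∃ x ∈ s, A x f) ≤ ∑ x ∈ s, roundPr nA p γ (A x) := by
  unfold roundPr
  rw [Finset.sum_comm]
  apply Finset.sum_le_sum
  intro f _
  have hprod : 0 ≤ ∏ v, actProb nA p (γ v) (f v) :=
    Finset.prod_nonneg fun v _ => hpr v (f v)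
  by_cases hE : ∃ x ∈ s, A x f
  · rw [if_pos hE]
    obtain ⟨x, hx, hAx⟩ := hE
    calc ∏ v, actProb nA p (γ v) (f v)
        = if A x f then ∏ v, actProb nA p (γ v) (f v) else 0 := by rw [if_pos hAx]
      _ ≤ ∑ y ∈ s, if A y f then ∏ v, actProb nA p (γ v) (f v) else 0 := by
          apply Finset.single_le_sum (fun y _ => ?_) hx
          split
          · exact hprod
          · exact le_refl 0
  · rw [if_neg hE]
    apply Finset.sum_nonneg
    intro y _
    split
    · exact hprod
    · exact le_refl 0

set_option maxHeartbeats 1000000 in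
lemma roundPr_cylinder (T : V → Finset (Act nA)) :
    roundPr nA p γ (fun f => ∀ v, f v ∈ T v)
      = ∏ v, ∑ a ∈ T v, actProb nA p (γ v) a := by
  unfold roundPr
  have step2 : (∑ f : V → Act nA, ∏ v, (fun v a => if a ∈ T v then actProb nA p (γ v) a else 0) v (f v))
      = ∏ v, ∑ a ∈ T v, actProb nA p (γ v) a := by
    rw [← Fintype.prod_sum (f := fun v a => if a ∈ T v then actProb nA p (γ v) a else 0)]
    refine Finset.prod_congr rfl fun v _ => ?_
    rw [Finset.sum_ite_mem, univ_inter]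
  rw [← step2]
  refine Finset.sum_congr rfl fun f _ => ?_
  by_cases h : ∀ v, f v ∈ T v
  · rw [if_pos h]
    exact Finset.prod_congr rfl fun v _ => (if_pos (h v)).symm
  · rw [if_neg h]
    push_neg at h
    obtain ⟨v, hv⟩ := h
    refine (Finset.prod_eq_zero (mem_univ v) ?_).symm
    exact if_neg hv

end roundpr
end herald_aux

section graphside
open Classical Real
variable {V : Type} [Fintype V] [DecidableEq V] (G : SimpleGraph V) [DecidableRel G.Adj]
  {nA : ℕ} {pl : ℝ} {γ : V → ℝ}

/-- Cylinder constraint set for the event that `x` listens on `i`, `w` broadcasts on `i`, and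
no other neighbor of `x` broadcasts on `i`. -/
noncomputable def Tcyl (i : Fin nA) (x w v : V) : Finset (Act nA) :=
  if v = x then {some (i, false)}
  else if v = w then {some (i, true)}
  else if v ∈ G.neighborFinset x then Finset.univ.erase (some (i, true))
  else Finset.univ

lemma recvOn_incl (f : V → Act nA) (x : V) (i : Fin nA) (h : receivesOn G f x i) :
    ∃ w ∈ G.neighborFinset x, ∀ v, f v ∈ Tcyl G i x w v := by
  obtain ⟨hl, hcard⟩ := h
  obtain ⟨w, hw⟩ := Finset.card_eq_one.1 hcard
  have hwmem : w ∈ (G.neighborFinset x).filter (fun w => broadcasts f w i) := by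
    rw [hw]; exact mem_singleton_self w
  rw [mem_filter] at hwmem
  refine ⟨w, hwmem.1, fun v => ?_⟩
  unfold Tcyl
  split_ifs with h1 h2 h3
  · subst h1
    rw [mem_singleton]
    exact hl
  · subst h2
    rw [mem_singleton]
    exact hwmem.2
  · refine Finset.mem_erase.2 ⟨?_, mem_univ _⟩
    intro hfv
    have hvmem : v ∈ (G.neighborFinset x).filter (fun w => broadcasts f w i) :=
      mem_filter.2 ⟨h3, hfv⟩
    rw [hw, mem_singleton] at hvmem
    exact h2 hvmem
  · exact mem_univ _

lemma exp_quarter_le_two : Real.exp (1/4 : ℝ) ≤ 2 := by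
  have h0 : Real.exp (1/4:ℝ) * Real.exp (1/4) * Real.exp (1/4) * Real.exp (1/4)
      = Real.exp 1 := by
    rw [← Real.exp_add, ← Real.exp_add, ← Real.exp_add]; norm_num
  nlinarith [Real.exp_one_lt_d9, Real.exp_pos (1/4:ℝ), sq_nonneg (Real.exp (1/4) - 2),
    sq_nonneg (Real.exp (1/4) + 2), sq_nonneg (Real.exp (1/4))]


variable (hpl : 0 < pl) (hpl2 : pl ≤ 1/2) (hγ : ∀ x, 0 ≤ γ x ∧ γ x ≤ 1/2)

include hpl hpl2 hγ

lemma hpr_all : ∀ (v : V) (a : Act nA), 0 ≤ actProb nA pl (γ v) a := fun v =>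
  actProb_nonneg hpl.le (le_trans hpl2 (by norm_num)) (hγ v).1
    (le_trans (hγ v).2 (by norm_num))

lemma cyl_le (x w : V) (hw : w ∈ G.neighborFinset x) (i : Fin nA) :
    (∏ v, ∑ a ∈ Tcyl G i x w v, actProb nA pl (γ v) a)
      ≤ (pl * γ x * (2:ℝ)^(-((i:ℤ)+1))) * (((1-pl) * γ w * (2:ℝ)^(-((i:ℤ)+1))) *
          Real.exp (1/4 - (1-pl) * GamO G γ x * (2:ℝ)^(-((i:ℤ)+1)))) := by
  have hxnb : x ∉ G.neighborFinset x := by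
    rw [SimpleGraph.mem_neighborFinset]
    exact G.irrefl
  have hxw : x ≠ w := fun h => hxnb (h ▸ hw)
  set t : ℝ := (2:ℝ)^(-((i:ℤ)+1)) with ht
  set F : V → ℝ := fun v => ∑ a ∈ Tcyl G i x w v, actProb nA pl (γ v) a with hF
  have hFx : F x = pl * γ x * t := by
    rw [hF]
    show ∑ a ∈ Tcyl G i x w x, actProb nA pl (γ x) a = _
    unfold Tcyl
    rw [if_pos rfl, Finset.sum_singleton]
    rfl
  have hFw : F w = (1 - pl) * γ w * t := by
    rw [hF]
    show ∑ a ∈ Tcyl G i x w w, actProb nA pl (γ w) a = _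
    unfold Tcyl
    rw [if_neg (Ne.symm hxw), if_pos rfl, Finset.sum_singleton]
    rfl
  have hFnb : ∀ v ∈ (G.neighborFinset x).erase w, F v = 1 - (1 - pl) * γ v * t := by
    intro v hv
    obtain ⟨hvw, hvnb⟩ := mem_erase.1 hv
    have hvx : v ≠ x := by rintro rfl; exact hxnb hvnb
    rw [hF]
    show ∑ a ∈ Tcyl G i x w v, actProb nA pl (γ v) a = _
    unfold Tcyl
    rw [if_neg hvx, if_neg hvw, if_pos hvnb,
      Finset.sum_erase_eq_sub (mem_univ (some (i, true))), actProb_sum]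
    rfl
  set S : Finset V := insert x (insert w ((G.neighborFinset x).erase w)) with hS
  have hF1 : ∀ v, v ∉ S → F v = 1 := by
    intro v hv
    rw [hS] at hv
    simp only [mem_insert, mem_erase, not_or] at hv
    push_neg at hv
    obtain ⟨hvx, hvw, hvnb⟩ := hv
    have hvnb' : v ∉ G.neighborFinset x := fun h => (hvnb hvw) h
    rw [hF]
    show ∑ a ∈ Tcyl G i x w v, actProb nA pl (γ v) a = _
    unfold Tcyl
    rw [if_neg hvx, if_neg hvw, if_neg hvnb']
    exact actProb_sum
  have hxS' : x ∉ insert w ((G.neighborFinset x).erase w) := by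
    rw [mem_insert]
    rintro (rfl | hx)
    · exact hxnb hw
    · exact hxnb (mem_of_mem_erase hx)
  have hprod : (∏ v, F v) = F x * (F w * ∏ v ∈ (G.neighborFinset x).erase w, F v) := by
    rw [← Finset.prod_subset (Finset.subset_univ S) (fun v _ hv => hF1 v hv), hS,
      Finset.prod_insert hxS', Finset.prod_insert (Finset.notMem_erase w _)]
  have hqbound : ∀ v : V, (1 - pl) * γ v * t ≤ 1/4 := by
    intro v
    have h1 : (1:ℝ) - pl ≤ 1 := by linarith
    have h2 := (hγ v).1
    have h3 := (hγ v).2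
    have h4 := tle i
    have h5 := (tpos i).le
    rw [← ht] at h4 h5
    have e1 : (1 - pl) * γ v ≤ 1/2 := by
      have := mul_nonneg hpl.le h2
      nlinarith
    calc (1 - pl) * γ v * t ≤ (1/2) * (1/2) := mul_le_mul e1 h4 h5 (by norm_num)
      _ ≤ 1/4 := by norm_num
  have hqnn : ∀ v : V, 0 ≤ (1 - pl) * γ v * t := by
    intro v
    have h5 := (tpos i).le
    rw [← ht] at h5
    have : (0:ℝ) ≤ 1 - pl := by linarith
    exact mul_nonneg (mul_nonneg this (hγ v).1) h5
  have hE : (∏ v ∈ (G.neighborFinset x).erase w, F v)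
      ≤ Real.exp (1/4 - (1-pl) * GamO G γ x * t) := by
    calc (∏ v ∈ (G.neighborFinset x).erase w, F v)
        = ∏ v ∈ (G.neighborFinset x).erase w, (1 - (1 - pl) * γ v * t) :=
          Finset.prod_congr rfl hFnb
      _ ≤ ∏ v ∈ (G.neighborFinset x).erase w, Real.exp (-((1 - pl) * γ v * t)) := by
          apply Finset.prod_le_prod
          · intro v _
            have := hqbound v
            linarith
          · intro v _
            have := Real.add_one_le_exp (-((1 - pl) * γ v * t))
            linarith
      _ = Real.exp (∑ v ∈ (G.neighborFinset x).erase w, -((1 - pl) * γ v * t)) :=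
          (Real.exp_sum _ _).symm
      _ ≤ Real.exp (1/4 - (1-pl) * GamO G γ x * t) := by
          apply Real.exp_le_exp.2
          have hsum : ∑ v ∈ (G.neighborFinset x).erase w, -((1 - pl) * γ v * t)
              = -(((1-pl) * t) * ((GamO G γ x) - γ w)) := by
            rw [show (fun v => -((1 - pl) * γ v * t)) = (fun v => (-((1-pl) * t)) * γ v) from
              funext fun v => by ring]
            rw [← Finset.mul_sum, Finset.sum_erase_eq_sub hw]
            unfold GamO
            ring
          rw [hsum]
          have := hqbound w
          nlinarith [hqbound w]
  have hFxnn : 0 ≤ F x := by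
    rw [hFx, ht]
    have := (tpos i).le
    have := (hγ x).1
    positivity
  have hFwnn : 0 ≤ F w := by rw [hFw]; exact hqnn w
  calc (∏ v, F v) = F x * (F w * ∏ v ∈ (G.neighborFinset x).erase w, F v) := hprod
    _ ≤ F x * (F w * Real.exp (1/4 - (1-pl) * GamO G γ x * t)) := by
        apply mul_le_mul_of_nonneg_left _ hFxnn
        exact mul_le_mul_of_nonneg_left hE hFwnn
    _ = (pl * γ x * t) * (((1-pl) * γ w * t) * Real.exp (1/4 - (1-pl) * GamO G γ x * t)) := by
        rw [hFx, hFw]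

lemma key_xi (x : V) (i : Fin nA) :
    roundPr nA pl γ (fun f => receivesOn G f x i)
      ≤ 2 * pl * γ x * ((2:ℝ)^(-((i:ℤ)+1)) * ((1-pl) * GamO G γ x * (2:ℝ)^(-((i:ℤ)+1)))
          * Real.exp (-((1-pl) * GamO G γ x * (2:ℝ)^(-((i:ℤ)+1))))) := by
  have hpr : ∀ (v : V) (a : Act nA), 0 ≤ actProb nA pl (γ v) a := hpr_all hpl hpl2 hγ
  have hGamOnn : 0 ≤ GamO G γ x := Finset.sum_nonneg fun y _ => (hγ y).1
  have htnn := (tpos (n := nA) i).le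
  have hQnn : 0 ≤ (1-pl) * GamO G γ x * (2:ℝ)^(-((i:ℤ)+1)) :=
    mul_nonneg (mul_nonneg (by linarith) hGamOnn) htnn
  calc roundPr nA pl γ (fun f => receivesOn G f x i)
      ≤ roundPr nA pl γ (fun f => ∃ w ∈ G.neighborFinset x, ∀ v, f v ∈ Tcyl G i x w v) :=
        roundPr_mono hpr (fun f h => recvOn_incl G f x i h)
    _ ≤ ∑ w ∈ G.neighborFinset x, roundPr nA pl γ (fun f => ∀ v, f v ∈ Tcyl G i x w v) :=
        roundPr_union hpr _ _
    _ = ∑ w ∈ G.neighborFinset x, ∏ v, ∑ a ∈ Tcyl G i x w v, actProb nA pl (γ v) a :=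
        Finset.sum_congr rfl fun w _ => roundPr_cylinder _
    _ ≤ ∑ w ∈ G.neighborFinset x, (pl * γ x * (2:ℝ)^(-((i:ℤ)+1))) *
          (((1-pl) * γ w * (2:ℝ)^(-((i:ℤ)+1))) *
            Real.exp (1/4 - (1-pl) * GamO G γ x * (2:ℝ)^(-((i:ℤ)+1)))) :=
        Finset.sum_le_sum fun w hw => cyl_le G hpl hpl2 hγ x w hw i
    _ = ∑ w ∈ G.neighborFinset x, ((pl * γ x * (2:ℝ)^(-((i:ℤ)+1))) *
          ((1-pl) * (2:ℝ)^(-((i:ℤ)+1)) *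
            Real.exp (1/4 - (1-pl) * GamO G γ x * (2:ℝ)^(-((i:ℤ)+1))))) * γ w :=
        Finset.sum_congr rfl fun w _ => by ring
    _ = ((pl * γ x * (2:ℝ)^(-((i:ℤ)+1))) *
          ((1-pl) * (2:ℝ)^(-((i:ℤ)+1)) *
            Real.exp (1/4 - (1-pl) * GamO G γ x * (2:ℝ)^(-((i:ℤ)+1))))) * GamO G γ x := by
        rw [← Finset.mul_sum]
        unfold GamO
        rfl
    _ ≤ 2 * pl * γ x * ((2:ℝ)^(-((i:ℤ)+1)) * ((1-pl) * GamO G γ x * (2:ℝ)^(-((i:ℤ)+1)))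
          * Real.exp (-((1-pl) * GamO G γ x * (2:ℝ)^(-((i:ℤ)+1))))) := by
        have hexp : Real.exp (1/4 - (1-pl) * GamO G γ x * (2:ℝ)^(-((i:ℤ)+1)))
            ≤ 2 * Real.exp (-((1-pl) * GamO G γ x * (2:ℝ)^(-((i:ℤ)+1)))) := by
          rw [show (1/4 - (1-pl) * GamO G γ x * (2:ℝ)^(-((i:ℤ)+1)))
            = 1/4 + (-((1-pl) * GamO G γ x * (2:ℝ)^(-((i:ℤ)+1)))) by ring, Real.exp_add]
          have := exp_quarter_le_two
          nlinarith [Real.exp_pos (-((1-pl) * GamO G γ x * (2:ℝ)^(-((i:ℤ)+1))))]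
        have hbase : 0 ≤ pl * γ x * (2:ℝ)^(-((i:ℤ)+1)) * ((1-pl) * GamO G γ x *
            (2:ℝ)^(-((i:ℤ)+1))) :=
          mul_nonneg (mul_nonneg (mul_nonneg hpl.le (hγ x).1) htnn) hQnn
        calc ((pl * γ x * (2:ℝ)^(-((i:ℤ)+1))) *
              ((1-pl) * (2:ℝ)^(-((i:ℤ)+1)) *
                Real.exp (1/4 - (1-pl) * GamO G γ x * (2:ℝ)^(-((i:ℤ)+1))))) * GamO G γ x
            = (pl * γ x * (2:ℝ)^(-((i:ℤ)+1)) * ((1-pl) * GamO G γ x * (2:ℝ)^(-((i:ℤ)+1))))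
              * Real.exp (1/4 - (1-pl) * GamO G γ x * (2:ℝ)^(-((i:ℤ)+1))) := by ring
          _ ≤ (pl * γ x * (2:ℝ)^(-((i:ℤ)+1)) * ((1-pl) * GamO G γ x * (2:ℝ)^(-((i:ℤ)+1))))
              * (2 * Real.exp (-((1-pl) * GamO G γ x * (2:ℝ)^(-((i:ℤ)+1))))) :=
              mul_le_mul_of_nonneg_left hexp hbase
          _ = 2 * pl * γ x * ((2:ℝ)^(-((i:ℤ)+1)) * ((1-pl) * GamO G γ x * (2:ℝ)^(-((i:ℤ)+1)))
              * Real.exp (-((1-pl) * GamO G γ x * (2:ℝ)^(-((i:ℤ)+1))))) := by ring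

lemma recv_le_basic (x : V) :
    roundPr nA pl γ (fun f => receives G f x)
      ≤ 2 * pl * γ x * ∑ i : Fin nA, (2:ℝ)^(-((i:ℤ)+1)) *
          (((1-pl) * GamO G γ x) * (2:ℝ)^(-((i:ℤ)+1)))
          * Real.exp (-(((1-pl) * GamO G γ x) * (2:ℝ)^(-((i:ℤ)+1)))) := by
  have hpr : ∀ (v : V) (a : Act nA), 0 ≤ actProb nA pl (γ v) a := hpr_all hpl hpl2 hγ
  calc roundPr nA pl γ (fun f => receives G f x)
      ≤ roundPr nA pl γ (fun f => ∃ i ∈ (Finset.univ : Finset (Fin nA)), receivesOn G f x i) :=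
        roundPr_mono hpr fun f h => by
          obtain ⟨i, hi⟩ := h
          exact ⟨i, mem_univ i, hi⟩
    _ ≤ ∑ i : Fin nA, roundPr nA pl γ (fun f => receivesOn G f x i) :=
        roundPr_union hpr _ _
    _ ≤ ∑ i : Fin nA, 2 * pl * γ x * ((2:ℝ)^(-((i:ℤ)+1)) *
          ((1-pl) * GamO G γ x * (2:ℝ)^(-((i:ℤ)+1)))
          * Real.exp (-((1-pl) * GamO G γ x * (2:ℝ)^(-((i:ℤ)+1))))) :=
        Finset.sum_le_sum fun i _ => key_xi G hpl hpl2 hγ x i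
    _ = 2 * pl * γ x * ∑ i : Fin nA, (2:ℝ)^(-((i:ℤ)+1)) *
          (((1-pl) * GamO G γ x) * (2:ℝ)^(-((i:ℤ)+1)))
          * Real.exp (-(((1-pl) * GamO G γ x) * (2:ℝ)^(-((i:ℤ)+1)))) := by
        rw [Finset.mul_sum]

lemma master (x : V) (D : ℝ) (hD : 0 < D) (hDle : D ≤ γ x + GamO G γ x) :
    roundPr nA pl γ (fun f => receives G f x) ≤ 1001 * pl * (γ x / D) := by
  have hpr : ∀ (v : V) (a : Act nA), 0 ≤ actProb nA pl (γ v) a := hpr_all hpl hpl2 hγ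
  have hGamOnn : 0 ≤ GamO G γ x := Finset.sum_nonneg fun y _ => (hγ y).1
  have hrnn : 0 ≤ (1-pl) * GamO G γ x := mul_nonneg (by linarith) hGamOnn
  have hγnn := (hγ x).1
  have hγle := (hγ x).2
  have hSterm : ∀ i : Fin nA, 0 ≤ (2:ℝ)^(-((i:ℤ)+1)) *
      (((1-pl) * GamO G γ x) * (2:ℝ)^(-((i:ℤ)+1)))
      * Real.exp (-(((1-pl) * GamO G γ x) * (2:ℝ)^(-((i:ℤ)+1)))) := by
    intro i
    have := (tpos (n := nA) i).le
    exact mul_nonneg (mul_nonneg this (mul_nonneg hrnn this)) (Real.exp_pos _).le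
  have hSnn : 0 ≤ ∑ i : Fin nA, (2:ℝ)^(-((i:ℤ)+1)) *
      (((1-pl) * GamO G γ x) * (2:ℝ)^(-((i:ℤ)+1)))
      * Real.exp (-(((1-pl) * GamO G γ x) * (2:ℝ)^(-((i:ℤ)+1)))) :=
    Finset.sum_nonneg fun i _ => hSterm i
  have hS1 : (∑ i : Fin nA, (2:ℝ)^(-((i:ℤ)+1)) *
      (((1-pl) * GamO G γ x) * (2:ℝ)^(-((i:ℤ)+1)))
      * Real.exp (-(((1-pl) * GamO G γ x) * (2:ℝ)^(-((i:ℤ)+1))))) ≤ 1 := by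
    calc (∑ i : Fin nA, (2:ℝ)^(-((i:ℤ)+1)) *
        (((1-pl) * GamO G γ x) * (2:ℝ)^(-((i:ℤ)+1)))
        * Real.exp (-(((1-pl) * GamO G γ x) * (2:ℝ)^(-((i:ℤ)+1)))))
        ≤ ∑ i : Fin nA, (2:ℝ)^(-((i:ℤ)+1)) := by
          apply Finset.sum_le_sum
          intro i _
          have htnn := (tpos (n := nA) i).le
          have hq : 0 ≤ ((1-pl) * GamO G γ x) * (2:ℝ)^(-((i:ℤ)+1)) := mul_nonneg hrnn htnn
          have h1 : (((1-pl) * GamO G γ x) * (2:ℝ)^(-((i:ℤ)+1)))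
              * Real.exp (-(((1-pl) * GamO G γ x) * (2:ℝ)^(-((i:ℤ)+1)))) ≤ 1 := by
            set q : ℝ := ((1-pl) * GamO G γ x) * (2:ℝ)^(-((i:ℤ)+1)) with hqdef
            have e1 : q ≤ Real.exp q := by
              have := Real.add_one_le_exp q; linarith
            have e2 : q * Real.exp (-q) ≤ Real.exp q * Real.exp (-q) :=
              mul_le_mul_of_nonneg_right e1 (Real.exp_pos _).le
            rwa [← Real.exp_add, add_neg_cancel, Real.exp_zero] at e2
          calc (2:ℝ)^(-((i:ℤ)+1)) * (((1-pl) * GamO G γ x) * (2:ℝ)^(-((i:ℤ)+1)))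
              * Real.exp (-(((1-pl) * GamO G γ x) * (2:ℝ)^(-((i:ℤ)+1))))
              = (2:ℝ)^(-((i:ℤ)+1)) * ((((1-pl) * GamO G γ x) * (2:ℝ)^(-((i:ℤ)+1)))
                * Real.exp (-(((1-pl) * GamO G γ x) * (2:ℝ)^(-((i:ℤ)+1))))) := by ring
            _ ≤ (2:ℝ)^(-((i:ℤ)+1)) * 1 := mul_le_mul_of_nonneg_left h1 htnn
            _ = (2:ℝ)^(-((i:ℤ)+1)) := by ring
      _ ≤ 1 := geomsum_le nA
  have hS2 : GamO G γ x * (∑ i : Fin nA, (2:ℝ)^(-((i:ℤ)+1)) *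
      (((1-pl) * GamO G γ x) * (2:ℝ)^(-((i:ℤ)+1)))
      * Real.exp (-(((1-pl) * GamO G γ x) * (2:ℝ)^(-((i:ℤ)+1))))) ≤ 500 := by
    have htel := telescope ((1-pl) * GamO G γ x) hrnn nA
    have hrS : ((1-pl) * GamO G γ x) * (∑ i : Fin nA, (2:ℝ)^(-((i:ℤ)+1)) *
        (((1-pl) * GamO G γ x) * (2:ℝ)^(-((i:ℤ)+1)))
        * Real.exp (-(((1-pl) * GamO G γ x) * (2:ℝ)^(-((i:ℤ)+1)))))
        = ∑ i : Fin nA, (((1-pl) * GamO G γ x) * (2:ℝ)^(-((i:ℤ)+1)))^2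
          * Real.exp (-(((1-pl) * GamO G γ x) * (2:ℝ)^(-((i:ℤ)+1)))) := by
      rw [Finset.mul_sum]
      exact Finset.sum_congr rfl fun i _ => by ring
    have hG2r : GamO G γ x ≤ 2 * ((1-pl) * GamO G γ x) := by nlinarith
    calc GamO G γ x * (∑ i : Fin nA, (2:ℝ)^(-((i:ℤ)+1)) *
        (((1-pl) * GamO G γ x) * (2:ℝ)^(-((i:ℤ)+1)))
        * Real.exp (-(((1-pl) * GamO G γ x) * (2:ℝ)^(-((i:ℤ)+1)))))
        ≤ (2 * ((1-pl) * GamO G γ x)) * (∑ i : Fin nA, (2:ℝ)^(-((i:ℤ)+1)) *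
          (((1-pl) * GamO G γ x) * (2:ℝ)^(-((i:ℤ)+1)))
          * Real.exp (-(((1-pl) * GamO G γ x) * (2:ℝ)^(-((i:ℤ)+1))))) :=
          mul_le_mul_of_nonneg_right hG2r hSnn
      _ = 2 * (((1-pl) * GamO G γ x) * (∑ i : Fin nA, (2:ℝ)^(-((i:ℤ)+1)) *
          (((1-pl) * GamO G γ x) * (2:ℝ)^(-((i:ℤ)+1)))
          * Real.exp (-(((1-pl) * GamO G γ x) * (2:ℝ)^(-((i:ℤ)+1)))))) := by ring
      _ ≤ 2 * 250 := by
          rw [hrS]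
          linarith
      _ = 500 := by norm_num
  have hPnn : 0 ≤ roundPr nA pl γ (fun f => receives G f x) := roundPr_nonneg hpr _
  have step1 := recv_le_basic (nA := nA) G hpl hpl2 hγ x
  have key1 : roundPr nA pl γ (fun f => receives G f x) ≤ 2 * pl * γ x := by
    have h2 : 0 ≤ 2 * pl * γ x := by positivity
    calc roundPr nA pl γ (fun f => receives G f x) ≤ _ := step1
      _ ≤ 2 * pl * γ x := mul_le_of_le_one_right h2 hS1
  have key2 : GamO G γ x * roundPr nA pl γ (fun f => receives G f x)
      ≤ 1000 * pl * γ x := by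
    calc GamO G γ x * roundPr nA pl γ (fun f => receives G f x)
        ≤ GamO G γ x * (2 * pl * γ x * ∑ i : Fin nA, (2:ℝ)^(-((i:ℤ)+1)) *
          (((1-pl) * GamO G γ x) * (2:ℝ)^(-((i:ℤ)+1)))
          * Real.exp (-(((1-pl) * GamO G γ x) * (2:ℝ)^(-((i:ℤ)+1))))) :=
          mul_le_mul_of_nonneg_left step1 hGamOnn
      _ = (2 * pl * γ x) * (GamO G γ x * ∑ i : Fin nA, (2:ℝ)^(-((i:ℤ)+1)) *
          (((1-pl) * GamO G γ x) * (2:ℝ)^(-((i:ℤ)+1)))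
          * Real.exp (-(((1-pl) * GamO G γ x) * (2:ℝ)^(-((i:ℤ)+1))))) := by ring
      _ ≤ (2 * pl * γ x) * 500 :=
          mul_le_mul_of_nonneg_left hS2 (by positivity)
      _ = 1000 * pl * γ x := by ring
  rw [show (1001:ℝ) * pl * (γ x / D) = (1001 * pl * γ x) / D by ring, le_div_iff₀ hD]
  have hc : roundPr nA pl γ (fun f => receives G f x) * D
      ≤ roundPr nA pl γ (fun f => receives G f x) * (γ x + GamO G γ x) :=
    mul_le_mul_of_nonneg_left hDle hPnn
  have hexp : roundPr nA pl γ (fun f => receives G f x) * (γ x + GamO G γ x)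
      ≤ 1001 * pl * γ x := by
    have h1 : γ x * roundPr nA pl γ (fun f => receives G f x) ≤ γ x * (2 * pl * γ x) :=
      mul_le_mul_of_nonneg_left key1 hγnn
    have h2 : pl * γ x * (1 - 2 * γ x) ≥ 0 :=
      mul_nonneg (mul_nonneg hpl.le hγnn) (by linarith)
    nlinarith [key2]
  linarith


end graphside
/-- There is an absolute constant `c > 0` such that in the herald-protocol round model, for
every vertex `u` and every `k ≥ 1`, the probability that some vertex of `N^k(u)` receives a
message is at most `c · π_ℓ · α(G[N^k(u)])`. -/
theorem stmt_10 : ∃ c : ℝ, 0 < c ∧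
    ∀ (V : Type) [Fintype V] [DecidableEq V] (G : SimpleGraph V) [DecidableRel G.Adj]
      (nA : ℕ), 1 ≤ nA →
      ∀ pl : ℝ, 0 < pl → pl ≤ 1 / 2 →
      ∀ γ : V → ℝ, (∀ x, 0 ≤ γ x ∧ γ x ≤ 1 / 2) →
      ∀ (u : V) (k : ℕ), 1 ≤ k →
      roundPr nA pl γ (fun f => ∃ x ∈ ball G u k, receives G f x) ≤
        c * pl * (indepNumOn G (ball G u k) : ℝ) := by
  refine ⟨1001, by norm_num, ?_⟩
  intro V _ _ G _ nA hnA pl hpl hpl2 γ hγ u k hk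
  classical
  have hpr : ∀ (v : V) (a : Act nA), 0 ≤ actProb nA pl (γ v) a := hpr_all hpl hpl2 hγ
  have hBfin : (ball G u k).Finite := Set.toFinite _
  set s : Finset V := hBfin.toFinset with hs
  have hsmem : ∀ x, x ∈ s ↔ x ∈ ball G u k := fun x => hBfin.mem_toFinset
  obtain ⟨I, hIs, hIind, hIsum⟩ := caroWei G γ (fun x => (hγ x).1) s
  have hIcard : (I.card : ℝ) ≤ (indepNumOn G (ball G u k) : ℝ) := by
    have hmem : I.card ∈ {n | ∃ t : Finset V, ↑t ⊆ ball G u k ∧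
        (∀ a ∈ t, ∀ b ∈ t, a ≠ b → ¬ G.Adj a b) ∧ t.card = n} := by
      refine ⟨I, ?_, hIind, rfl⟩
      intro x hx
      exact (hsmem x).1 (hIs (Finset.mem_coe.1 hx))
    have hbdd : BddAbove {n | ∃ t : Finset V, ↑t ⊆ ball G u k ∧
        (∀ a ∈ t, ∀ b ∈ t, a ≠ b → ¬ G.Adj a b) ∧ t.card = n} := by
      refine ⟨Fintype.card V, ?_⟩
      rintro n ⟨t, _, _, rfl⟩
      exact t.card_le_univ
    have hle : I.card ≤ indepNumOn G (ball G u k) := by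
      unfold indepNumOn
      exact le_csSup hbdd hmem
    exact_mod_cast hle
  have hper : ∀ x ∈ s, roundPr nA pl γ (fun f => receives G f x)
      ≤ 1001 * pl * (γ x / ∑ y ∈ s.filter (fun y => y = x ∨ G.Adj x y), γ y) := by
    intro x hx
    rcases eq_or_lt_of_le (hγ x).1 with h0 | h0
    · have hb := recv_le_basic (nA := nA) G hpl hpl2 hγ x
      rw [← h0] at hb ⊢
      simp only [mul_zero, zero_mul, zero_div] at hb ⊢
      exact hb
    · have hxf : x ∈ s.filter (fun y => y = x ∨ G.Adj x y) := mem_filter.2 ⟨hx, Or.inl rfl⟩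
      have hDpos : 0 < ∑ y ∈ s.filter (fun y => y = x ∨ G.Adj x y), γ y :=
        lt_of_lt_of_le h0 (Finset.single_le_sum (fun y _ => (hγ y).1) hxf)
      have hDle : (∑ y ∈ s.filter (fun y => y = x ∨ G.Adj x y), γ y)
          ≤ γ x + GamO G γ x := by
        have hsub : s.filter (fun y => y = x ∨ G.Adj x y) ⊆ insert x (G.neighborFinset x) := by
          intro y hy
          rcases (mem_filter.1 hy).2 with rfl | hadj
          · exact mem_insert_self _ _
          · refine mem_insert_of_mem ?_
            rw [SimpleGraph.mem_neighborFinset]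
            exact hadj
        calc (∑ y ∈ s.filter (fun y => y = x ∨ G.Adj x y), γ y)
            ≤ ∑ y ∈ insert x (G.neighborFinset x), γ y :=
              Finset.sum_le_sum_of_subset_of_nonneg hsub (fun y _ _ => (hγ y).1)
          _ = γ x + GamO G γ x := by
              rw [Finset.sum_insert (by rw [SimpleGraph.mem_neighborFinset]; exact G.irrefl)]
              unfold GamO
              rfl
      exact master G hpl hpl2 hγ x _ hDpos hDle
  calc roundPr nA pl γ (fun f => ∃ x ∈ ball G u k, receives G f x)
      ≤ roundPr nA pl γ (fun f => ∃ x ∈ s, receives G f x) := by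
        apply roundPr_mono hpr
        intro f h
        obtain ⟨x, hx, hr⟩ := h
        exact ⟨x, (hsmem x).2 hx, hr⟩
    _ ≤ ∑ x ∈ s, roundPr nA pl γ (fun f => receives G f x) := roundPr_union hpr _ _
    _ ≤ ∑ x ∈ s, 1001 * pl * (γ x / ∑ y ∈ s.filter (fun y => y = x ∨ G.Adj x y), γ y) :=
        Finset.sum_le_sum hper
    _ = 1001 * pl * ∑ x ∈ s, γ x / ∑ y ∈ s.filter (fun y => y = x ∨ G.Adj x y), γ y := by
        rw [Finset.mul_sum]
    _ ≤ 1001 * pl * I.card :=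
        mul_le_mul_of_nonneg_left hIsum (by positivity)
    _ ≤ 1001 * pl * (indepNumOn G (ball G u k) : ℝ) :=
        mul_le_mul_of_nonneg_left hIcard (by positivity)
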